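/- arXiv:math/0201239 — 4 statements merged into one kernel-verified Lean document; each statement's English description precedes it below -/
import Mathlib

section
/- Let X be a locally compact topological space, Y a topological space, f : X → Y continuous, and φ : X × ℝ → X a continuous flow preserving the fibres of f (i.e. f(φₜ(x)) = f(x) for all x, t). If x is an equilibrium point of φ (φₜ(x) = x for all t) and x is an isolated point of f⁻¹(T₂(f(x))), then x is Lyapunov stable: for every neighbourhood U of x there is a neighbourhood V of x such that p ∈ V implies φₜ(p) ∈ U for all t ∈ ℝ. -/
/-- The set of points that cannot be separated from `y` by disjoint neighbourhoods. -/
def T2Set {Y : Type*} [TopologicalSpace Y] (y : Y) : Set Y :=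
  {y' | ∀ U ∈ nhds y, ∀ U' ∈ nhds y', (U ∩ U').Nonempty}

/-- If an orbit starts in the interior of a compact set `K` and avoids an open set `O`
containing `K \ interior K`, then it stays in `interior K` for all nonnegative times. -/
lemma aux_trap {X : Type*} [TopologicalSpace X]
    (φ : ℝ → X → X) (hφcont : Continuous fun p : X × ℝ => φ p.2 p.1)
    (hφ0 : ∀ x : X, φ 0 x = x) (hφadd : ∀ (s t : ℝ) (x : X), φ (s + t) x = φ s (φ t x))
    (K O : Set X) (hK : IsCompact K) (hO : IsOpen O) (hBO : K \ interior K ⊆ O)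
    (p : X) (hp : p ∈ interior K) (havoid : ∀ s : ℝ, φ s p ∉ O)
    (t : ℝ) (ht : 0 ≤ t) : φ t p ∈ interior K := by
  by_contra hc
  have hg : Continuous fun s : ℝ => φ s p :=
    hφcont.comp (continuous_const.prodMk continuous_id)
  set T : Set ℝ := {s | φ s p ∈ interior K} with hTdef
  have hT : IsOpen T := isOpen_interior.preimage hg
  set A : Set ℝ := {s ∈ Set.Icc 0 t | Set.Icc 0 s ⊆ T} with hAdef
  have h0A : (0 : ℝ) ∈ A := by
    refine ⟨⟨le_refl 0, ht⟩, fun r hr => ?_⟩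
    have : r = 0 := le_antisymm hr.2 hr.1
    simp only [hTdef, Set.mem_setOf_eq, this, hφ0]
    exact hp
  have hAbdd : BddAbove A := ⟨t, fun a ha => ha.1.2⟩
  set s₀ : ℝ := sSup A with hs₀def
  have hs0 : 0 ≤ s₀ := le_csSup hAbdd h0A
  have hst : s₀ ≤ t := csSup_le ⟨0, h0A⟩ fun a ha => ha.1.2
  have hlt : ∀ r : ℝ, 0 ≤ r → r < s₀ → r ∈ T := by
    intro r hr0 hrs
    obtain ⟨a, haA, hra⟩ := exists_lt_of_lt_csSup ⟨0, h0A⟩ hrs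
    exact haA.2 ⟨hr0, hra.le⟩
  have hsT : s₀ ∉ T := by
    intro hsT
    have hIcc : Set.Icc 0 s₀ ⊆ T := by
      intro r hr
      rcases lt_or_eq_of_le hr.2 with h | h
      · exact hlt r hr.1 h
      · exact h ▸ hsT
    rcases eq_or_lt_of_le hst with h | h
    · exact hc (h ▸ hsT)
    · obtain ⟨ε, hε, hball⟩ := Metric.isOpen_iff.1 hT s₀ hsT
      set a : ℝ := min t (s₀ + ε / 2) with hadef
      have has : s₀ < a := lt_min h (by linarith)
      have haA : a ∈ A := by
        refine ⟨⟨le_trans hs0 has.le, min_le_left _ _⟩, fun r hr => ?_⟩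
        rcases le_or_gt r s₀ with h' | h'
        · exact hIcc ⟨hr.1, h'⟩
        · refine hball ?_
          have : a ≤ s₀ + ε / 2 := min_le_right _ _
          have h2 : r ≤ s₀ + ε / 2 := le_trans hr.2 this
          simp only [Metric.mem_ball, Real.dist_eq, abs_lt]
          constructor <;> linarith
      exact absurd (le_csSup hAbdd haA) (not_le.2 has)
  have hzO : φ s₀ p ∉ O := havoid s₀
  have hzK : φ s₀ p ∉ K := fun h => hzO (hBO ⟨h, hsT⟩)
  have hs_pos : 0 < s₀ := by
    rcases lt_or_eq_of_le hs0 with h | h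
    · exact h
    · exfalso; apply hsT; simp only [hTdef, Set.mem_setOf_eq, ← h, hφ0]; exact hp
  set l : Filter ℝ := nhdsWithin s₀ (Set.Ioo 0 s₀) with hldef
  haveI hlne : l.NeBot := by
    rw [hldef, ← mem_closure_iff_nhdsWithin_neBot, closure_Ioo hs_pos.ne]
    exact ⟨hs_pos.le, le_refl _⟩
  have hmapK : Filter.map (fun s => φ s p) l ≤ Filter.principal K := by
    rw [Filter.le_principal_iff, Filter.mem_map]
    exact Filter.mem_of_superset self_mem_nhdsWithin
      fun r hr => (show φ r p ∈ K from interior_subset (hlt r hr.1.le hr.2))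
  obtain ⟨y, hyK, hy⟩ := hK.exists_mapClusterPt hmapK
  have hyO : y ∉ O := by
    intro h
    obtain ⟨r, hr⟩ := (mapClusterPt_iff_frequently.1 hy O (hO.mem_nhds h)).exists
    exact havoid r hr
  have hyint : y ∈ interior K := by
    by_contra h
    exact hyO (hBO ⟨hyK, h⟩)
  -- the pair map has (y, 0) as a cluster point
  have htend : Filter.Tendsto (fun r : ℝ => s₀ - r) l (nhds 0) := by
    have : Filter.Tendsto (fun r : ℝ => s₀ - r) (nhds s₀) (nhds (s₀ - s₀)) :=
      (continuous_const.sub continuous_id).tendsto s₀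
    rw [sub_self] at this
    exact this.mono_left nhdsWithin_le_nhds
  have hpair : MapClusterPt ((y, (0 : ℝ)) : X × ℝ) l (fun r => (φ r p, s₀ - r)) := by
    rw [mapClusterPt_iff_frequently]
    intro s hs
    rw [mem_nhds_prod_iff] at hs
    obtain ⟨A', hA', B', hB', hsub⟩ := hs
    have hfreq : ∃ᶠ r in l, φ r p ∈ A' := mapClusterPt_iff_frequently.1 hy A' hA'
    have hev : ∀ᶠ r in l, s₀ - r ∈ B' := htend hB'
    exact (hfreq.and_eventually hev).mono fun r ⟨h1, h2⟩ => hsub (Set.mk_mem_prod h1 h2)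
  have hcomp : MapClusterPt (φ 0 y) l
      ((fun q : X × ℝ => φ q.2 q.1) ∘ fun r => (φ r p, s₀ - r)) :=
    hpair.continuousAt_comp hφcont.continuousAt
  have hconst : ((fun q : X × ℝ => φ q.2 q.1) ∘ fun r => (φ r p, s₀ - r)) =
      fun _ : ℝ => φ s₀ p := by
    funext r
    show φ (s₀ - r) (φ r p) = φ s₀ p
    rw [← hφadd]
    norm_num
  rw [hconst, hφ0] at hcomp
  have hcl : y ∈ closure {φ s₀ p} := by
    rw [mem_closure_iff_clusterPt, Filter.principal_singleton]
    have h2 := hcomp.clusterPt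
    rwa [Filter.map_const] at h2
  obtain ⟨w, hw1, hw2⟩ := (mem_closure_iff.1 hcl) (interior K) isOpen_interior hyint
  rw [Set.mem_singleton_iff] at hw2
  exact hzK (interior_subset (hw2 ▸ hw1))

theorem stmt6 {X Y : Type*} [TopologicalSpace X] [LocallyCompactSpace X] [TopologicalSpace Y]
    (f : X → Y) (hf : Continuous f)
    (φ : ℝ → X → X) (hφcont : Continuous fun p : X × ℝ => φ p.2 p.1)
    (hφ0 : ∀ x : X, φ 0 x = x) (hφadd : ∀ (s t : ℝ) (x : X), φ (s + t) x = φ s (φ t x))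
    (hpres : ∀ (t : ℝ) (x : X), f (φ t x) = f x)
    (x : X) (heq : ∀ t : ℝ, φ t x = x)
    (hiso : ∃ U ∈ nhds x, f ⁻¹' T2Set (f x) ∩ U = {x}) :
    ∀ U ∈ nhds x, ∃ V ∈ nhds x, ∀ p ∈ V, ∀ t : ℝ, φ t p ∈ U := by
  obtain ⟨U₀, hU₀, hU₀eq⟩ := hiso
  intro U hU
  obtain ⟨K, hKnhds, hKsub, hKcomp⟩ := local_compact_nhds (Filter.inter_mem hU hU₀)
  have hxint : x ∈ interior K := mem_interior_iff_mem_nhds.2 hKnhds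
  have hBcomp : IsCompact (K \ interior K) := hKcomp.diff isOpen_interior
  -- for each boundary point, separating data
  have key : ∀ q : X, ∃ W : Set Y, W ∈ nhds (f x) ∧ ∃ N : Set X,
      (q ∈ K \ interior K → IsOpen N ∧ q ∈ N) ∧ ∀ p : X, f p ∈ W → p ∉ N := by
    intro q
    by_cases hq : q ∈ K \ interior K
    · have hqx : q ≠ x := fun h => (h ▸ hq).2 hxint
      have hqT2 : f q ∉ T2Set (f x) := by
        intro hT2
        exact hqx (by
          have : q ∈ f ⁻¹' T2Set (f x) ∩ U₀ := ⟨hT2, (hKsub hq.1).2⟩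
          rwa [hU₀eq, Set.mem_singleton_iff] at this)
      simp only [T2Set, Set.mem_setOf_eq, not_forall] at hqT2
      obtain ⟨W, hW, W', hW', hWW'⟩ := hqT2
      obtain ⟨W'o, hW'o_sub, hW'o_open, hW'o_mem⟩ := mem_nhds_iff.1 hW'
      refine ⟨W, hW, f ⁻¹' W'o, fun _ => ⟨hW'o_open.preimage hf, hW'o_mem⟩, ?_⟩
      intro p hpW hpW'
      exact hWW' ⟨f p, hpW, hW'o_sub hpW'⟩
    · exact ⟨Set.univ, Filter.univ_mem, ∅, fun h => absurd h hq, fun _ _ h => h⟩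
  choose W hW N hN hNdisj using key
  obtain ⟨T, hTB, hTcov⟩ := hBcomp.elim_nhds_subcover N
    (fun q hq => ((hN q hq).1).mem_nhds ((hN q hq).2))
  set O : Set X := ⋃ q ∈ T, N q with hOdef
  have hOopen : IsOpen O := isOpen_biUnion fun q hq => (hN q (hTB q hq)).1
  have hWT : (⋂ q ∈ T, W q) ∈ nhds (f x) :=
    (Filter.biInter_finset_mem T).2 fun q _ => hW q
  refine ⟨interior K ∩ f ⁻¹' (⋂ q ∈ T, W q),
    Filter.inter_mem (isOpen_interior.mem_nhds hxint)
      (hf.continuousAt.preimage_mem_nhds hWT), ?_⟩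
  rintro p ⟨hpK, hpW⟩ t
  -- the orbit avoids O
  have horb : ∀ s : ℝ, φ s p ∉ O := by
    intro s hsO
    obtain ⟨q, hqT, hqN⟩ := Set.mem_iUnion₂.1 hsO
    have hfW : f (φ s p) ∈ W q := by
      rw [hpres]
      exact Set.mem_iInter₂.1 hpW q hqT
    exact hNdisj q _ hfW hqN
  have hBO : K \ interior K ⊆ O := hTcov
  have main : φ t p ∈ interior K := by
    rcases le_or_gt 0 t with ht | ht
    · exact aux_trap φ hφcont hφ0 hφadd K O hKcomp hOopen hBO p hpK horb t ht
    · have := aux_trap (fun s => φ (-s))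
        (by
          have : Continuous fun q : X × ℝ => φ (-q.2) q.1 :=
            hφcont.comp (continuous_fst.prodMk continuous_snd.neg)
          exact this)
        (fun z => by show φ (-0) z = z; rw [neg_zero, hφ0])
        (fun s t z => by show φ (-(s+t)) z = φ (-s) (φ (-t) z); rw [neg_add, hφadd])
        K O hKcomp hOopen hBO p hpK (fun s => horb (-s)) (-t) (by linarith)
      simpa using this
  exact (hKsub (interior_subset main)).1
end

section
/- Consider the Poisson structure on ℝ³ given by {h,f} = ∇A·(∇h×∇f) with A = (x² - y²)/2. For the Hamiltonian h = a x² - b y² + z² with a > b, the origin is a Lyapunov stable equilibrium of the vector field ẋ = ∇A × ∇h. (Proof via the Energy-Casimir function h - 2λA = (a-λ)x² - (b-λ)y² + z², which for b < λ < a is positive definite and conserved.) -/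
set_option maxHeartbeats 1000000 in
/-- Energy-Casimir stability on `ℝ³` with bracket determined by `A = (x² - y²)/2` and
Hamiltonian `h = a x² - b y² + z²`, `a > b`: the origin is Lyapunov stable for
`ẋ = ∇A × ∇h` (here `∇A x = (x, -y, 0)` and `∇h x = (2ax, -2by, 2z)`). -/
theorem stmt9 (a b : ℝ) (hab : a > b) :
    ∀ ε > 0, ∃ δ > 0, ∀ c : ℝ → (Fin 3 → ℝ),
      (∀ t : ℝ, HasDerivAt c
        (crossProduct ![c t 0, -c t 1, 0] ![2 * a * c t 0, -(2 * b * c t 1), 2 * c t 2]) t) →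
      ‖c 0‖ < δ → ∀ t : ℝ, ‖c t‖ < ε := by
  intro ε hε
  set m : ℝ := (a - b) / 2 with hm
  have hm0 : 0 < m := by rw [hm]; linarith
  set k : ℝ := min m 1 with hk
  have hk0 : 0 < k := lt_min hm0 one_pos
  have hM : 0 < 2 * m + 1 := by linarith
  refine ⟨ε * Real.sqrt (k / (2 * m + 1)), by positivity, ?_⟩
  intro c hc hc0 t
  -- coordinate derivatives
  have hco : ∀ s : ℝ, ∀ i : Fin 3, HasDerivAt (fun u => c u i)
      (![-2 * (c s 1) * (c s 2), -2 * (c s 0) * (c s 2),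
        2 * (a - b) * (c s 0) * (c s 1)] i) s := by
    intro s i
    have h := (hasDerivAt_pi.mp (hc s)) i
    refine h.congr_deriv ?_
    fin_cases i <;> simp [cross_apply] <;> ring
  set g : ℝ → ℝ := fun u => m * (c u 0) ^ 2 + m * (c u 1) ^ 2 + (c u 2) ^ 2 with hgdef
  have hg' : ∀ s : ℝ, HasDerivAt g 0 s := by
    intro s
    have h0 := hco s 0
    have h1 := hco s 1
    have h2 := hco s 2
    simp only [Matrix.cons_val_zero, Matrix.cons_val_one, Matrix.head_cons,
      Matrix.cons_val_two, Matrix.tail_cons] at h0 h1 h2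
    have h := (((h0.pow 2).const_mul m).add ((h1.pow 2).const_mul m)).add (h2.pow 2)
    refine h.congr_deriv ?_
    rw [hm]; ring
  have hgc : ∀ s : ℝ, g s = g 0 :=
    fun s => is_const_of_deriv_eq_zero (fun x => (hg' x).differentiableAt)
      (fun x => (hg' x).deriv) s 0
  -- bound initial value
  have hδ := hc0
  have hci : ∀ i : Fin 3, |c 0 i| < ε * Real.sqrt (k / (2 * m + 1)) := by
    intro i
    calc |c 0 i| = ‖c 0 i‖ := (Real.norm_eq_abs _).symm
    _ ≤ ‖c 0‖ := norm_le_pi_norm _ i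
    _ < _ := hδ
  have hsq : (Real.sqrt (k / (2 * m + 1))) ^ 2 = k / (2 * m + 1) :=
    Real.sq_sqrt (by positivity)
  have hg0 : g 0 < k * ε ^ 2 := by
    have h0 := hci 0
    have h1 := hci 1
    have h2 := hci 2
    have e0 := abs_nonneg (c 0 0)
    have e1 := abs_nonneg (c 0 1)
    have e2 := abs_nonneg (c 0 2)
    have s0 := sq_abs (c 0 0)
    have s1 := sq_abs (c 0 1)
    have s2 := sq_abs (c 0 2)
    have hd : (ε * Real.sqrt (k / (2 * m + 1))) ^ 2 = k * ε ^ 2 / (2 * m + 1) := by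
      rw [mul_pow, hsq]; ring
    have hlt : ∀ x : ℝ, |x| < ε * Real.sqrt (k / (2 * m + 1)) →
        x ^ 2 < k * ε ^ 2 / (2 * m + 1) := by
      intro x hx
      have := abs_nonneg x
      nlinarith [sq_abs x]
    have p0 := hlt _ h0
    have p1 := hlt _ h1
    have p2 := hlt _ h2
    have hkm : k ≤ m := min_le_left _ _
    have hk1 : k ≤ 1 := min_le_right _ _
    simp only [hgdef]
    have hx0 : (0:ℝ) ≤ (c 0 0) ^ 2 := sq_nonneg _
    have hx1 : (0:ℝ) ≤ (c 0 1) ^ 2 := sq_nonneg _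
    have hx2 : (0:ℝ) ≤ (c 0 2) ^ 2 := sq_nonneg _
    have hb : m * (c 0 0) ^ 2 + m * (c 0 1) ^ 2 + (c 0 2) ^ 2
        < (2 * m + 1) * (k * ε ^ 2 / (2 * m + 1)) := by nlinarith
    have : (2 * m + 1) * (k * ε ^ 2 / (2 * m + 1)) = k * ε ^ 2 := by field_simp
    linarith [hb, this.ge, this.le]
  -- conclude
  have hkey : ∀ i : Fin 3, |c t i| < ε := by
    intro i
    have hgt : g t < k * ε ^ 2 := by rw [hgc t]; exact hg0
    have hkm : k ≤ m := min_le_left _ _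
    have hk1 : k ≤ 1 := min_le_right _ _
    have hterm : k * (c t i) ^ 2 ≤ g t := by
      simp only [hgdef]
      fin_cases i
      · show k * (c t 0) ^ 2 ≤ m * (c t 0) ^ 2 + m * (c t 1) ^ 2 + (c t 2) ^ 2
        nlinarith [sq_nonneg (c t 0), sq_nonneg (c t 1), sq_nonneg (c t 2)]
      · show k * (c t 1) ^ 2 ≤ m * (c t 0) ^ 2 + m * (c t 1) ^ 2 + (c t 2) ^ 2
        nlinarith [sq_nonneg (c t 0), sq_nonneg (c t 1), sq_nonneg (c t 2)]
      · show k * (c t 2) ^ 2 ≤ m * (c t 0) ^ 2 + m * (c t 1) ^ 2 + (c t 2) ^ 2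
        nlinarith [sq_nonneg (c t 0), sq_nonneg (c t 1), sq_nonneg (c t 2)]
    have hsq2 : (c t i) ^ 2 < ε ^ 2 := by
      have := hterm.trans_lt hgt
      nlinarith
    nlinarith [abs_nonneg (c t i), sq_abs (c t i)]
  rw [pi_norm_lt_iff hε]
  intro i
  rw [Real.norm_eq_abs]
  exact hkey i
end

section
/- For the coadjoint action of SE(2) on se(2)* ≅ ℝ³ and a point μₑ = (μʳₑ, 0) on the μʳ-axis, the T₂-set of the orbit space at μₑ is the μʳ-axis: a point ν belongs to the union of orbits not separable from the orbit of μₑ if and only if ν = (νʳ, 0) for some νʳ ∈ ℝ. Equivalently, in the quotient space ℝ³/SE(2) with the quotient topology, the classes of (μʳ, 0) and (νʳ, 0) cannot be separated by disjoint open sets for any μʳ, νʳ, while the class of any (μʳ, μᵃ) with μᵃ ≠ 0 can be separated from the class of (μʳₑ, 0). -/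
/-- The `π/2` rotation matrix `𝕁 = [[0,1],[-1,0]]`. -/
def Jmat : Matrix (Fin 2) (Fin 2) ℝ := !![0, 1; -1, 0]

/-- Membership in `SO(2)`. -/
def IsSO2 (R : Matrix (Fin 2) (Fin 2) ℝ) : Prop := R * R.transpose = 1 ∧ R.det = 1

/-- The coadjoint action of `(R,a) ∈ SE(2)` on `(μʳ, μᵃ) ∈ se(2)* ≅ ℝ × ℝ²`. -/
def coadj (R : Matrix (Fin 2) (Fin 2) ℝ) (a : Fin 2 → ℝ) (μ : ℝ × (Fin 2 → ℝ)) :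
    ℝ × (Fin 2 → ℝ) :=
  (μ.1 + dotProduct (R.mulVec (Jmat.mulVec μ.2)) a, R.mulVec μ.2)

/-- A set saturated by the `SE(2)`-coadjoint action (a union of orbits). -/
def Invariant (U : Set (ℝ × (Fin 2 → ℝ))) : Prop :=
  ∀ (R : Matrix (Fin 2) (Fin 2) ℝ) (a : Fin 2 → ℝ) (μ : ℝ × (Fin 2 → ℝ)),
    IsSO2 R → μ ∈ U → coadj R a μ ∈ U

lemma so2_norm_preserve (R : Matrix (Fin 2) (Fin 2) ℝ) (hR : IsSO2 R) (v : Fin 2 → ℝ) :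
    dotProduct (R.mulVec v) (R.mulVec v) = dotProduct v v := by
  have h1 : R.transpose * R = 1 := mul_eq_one_comm.mp hR.1
  calc dotProduct (R.mulVec v) (R.mulVec v)
      = dotProduct (Matrix.vecMul (R.mulVec v) R) v := Matrix.dotProduct_mulVec _ _ _
    _ = dotProduct (R.transpose.mulVec (R.mulVec v)) v := by
        rw [Matrix.mulVec_transpose]
    _ = dotProduct ((R.transpose * R).mulVec v) v := by rw [Matrix.mulVec_mulVec]
    _ = dotProduct v v := by rw [h1, Matrix.one_mulVec]

lemma cont_q : Continuous fun v : Fin 2 → ℝ => dotProduct v v := by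
  simp only [dotProduct, Fin.sum_univ_two]
  fun_prop

/-- The `T₂`-set of the orbit space of the `SE(2)` coadjoint action at a point of the
`μʳ`-axis is the `μʳ`-axis: the orbit of `ν` cannot be separated from the orbit of
`(μʳₑ, 0)` by saturated open sets if and only if `νᵃ = 0`. -/
theorem stmt14 (μre : ℝ) (ν : ℝ × (Fin 2 → ℝ)) :
    (∀ U V : Set (ℝ × (Fin 2 → ℝ)), IsOpen U → IsOpen V → Invariant U → Invariant V →
      (μre, (0 : Fin 2 → ℝ)) ∈ U → ν ∈ V → (U ∩ V).Nonempty) ↔ ν.2 = 0 := by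
  constructor
  · intro h
    by_contra hne
    -- separate by cylinders
    set t : ℝ := dotProduct ν.2 ν.2 / 2 with ht
    have hq0 : 0 < dotProduct ν.2 ν.2 := by
      have : ν.2 0 ≠ 0 ∨ ν.2 1 ≠ 0 := by
        by_contra hc
        push_neg at hc
        apply hne
        funext i
        fin_cases i
        · exact hc.1
        · exact hc.2
      simp only [dotProduct, Fin.sum_univ_two]
      rcases this with h0 | h0 <;>
        nlinarith [mul_self_pos.mpr h0, mul_self_nonneg (ν.2 0), mul_self_nonneg (ν.2 1)]
    have ht0 : 0 < t := by positivity
    set U : Set (ℝ × (Fin 2 → ℝ)) := {μ | dotProduct μ.2 μ.2 < t} with hU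
    set V : Set (ℝ × (Fin 2 → ℝ)) := {μ | t < dotProduct μ.2 μ.2} with hV
    have hUo : IsOpen U := isOpen_lt (cont_q.comp continuous_snd) continuous_const
    have hVo : IsOpen V := isOpen_lt continuous_const (cont_q.comp continuous_snd)
    have hUi : Invariant U := by
      intro R a μ hR hμ
      show dotProduct (coadj R a μ).2 (coadj R a μ).2 < t
      rw [show (coadj R a μ).2 = R.mulVec μ.2 from rfl, so2_norm_preserve R hR]
      exact hμ
    have hVi : Invariant V := by
      intro R a μ hR hμ
      show t < dotProduct (coadj R a μ).2 (coadj R a μ).2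
      rw [show (coadj R a μ).2 = R.mulVec μ.2 from rfl, so2_norm_preserve R hR]
      exact hμ
    have hμU : (μre, (0 : Fin 2 → ℝ)) ∈ U := by
      simp [U, dotProduct, ht0]
    have hνV : ν ∈ V := by
      simp only [V, Set.mem_setOf_eq, ht]
      linarith
    obtain ⟨x, hxU, hxV⟩ := h U V hUo hVo hUi hVi hμU hνV
    have h1 : dotProduct x.2 x.2 < t := hxU
    have h2 : t < dotProduct x.2 x.2 := hxV
    linarith
  · intro hν U V hUo hVo hUi hVi hμU hνV
    -- find ε > 0 with (μre, ![ε,0]) ∈ U and (ν.1, ![ε,0]) ∈ V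
    have hf : Continuous fun ε : ℝ => ((μre, ![ε, 0]) : ℝ × (Fin 2 → ℝ)) := by
      refine continuous_const.prodMk (continuous_pi fun i => ?_)
      fin_cases i
      · exact continuous_id
      · exact continuous_const
    have hg : Continuous fun ε : ℝ => ((ν.1, ![ε, 0]) : ℝ × (Fin 2 → ℝ)) := by
      refine continuous_const.prodMk (continuous_pi fun i => ?_)
      fin_cases i
      · exact continuous_id
      · exact continuous_const
    have h0v : (![(0:ℝ), 0] : Fin 2 → ℝ) = 0 := by
      funext i; fin_cases i <;> rfl
    have hU0 : (0 : ℝ) ∈ (fun ε : ℝ => ((μre, ![ε, 0]) : ℝ × (Fin 2 → ℝ))) ⁻¹' U := by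
      simpa [h0v] using hμU
    have hV0 : (0 : ℝ) ∈ (fun ε : ℝ => ((ν.1, ![ε, 0]) : ℝ × (Fin 2 → ℝ))) ⁻¹' V := by
      have : ((ν.1, ![(0:ℝ), 0]) : ℝ × (Fin 2 → ℝ)) = ν := by
        rw [h0v, ← hν]
      simpa [this] using hνV
    obtain ⟨δU, hδU, hballU⟩ := Metric.isOpen_iff.mp (hUo.preimage hf) 0 hU0
    obtain ⟨δV, hδV, hballV⟩ := Metric.isOpen_iff.mp (hVo.preimage hg) 0 hV0
    set ε : ℝ := min δU δV / 2 with hε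
    have hε0 : 0 < ε := by positivity
    have hεU : ε < δU := by
      have := min_le_left δU δV; linarith
    have hεV : ε < δV := by
      have := min_le_right δU δV; linarith
    have hmemU : ((μre, ![ε, 0]) : ℝ × (Fin 2 → ℝ)) ∈ U := by
      apply hballU
      simp only [Metric.mem_ball, Real.dist_eq, sub_zero]
      rw [abs_of_pos hε0]; exact hεU
    have hmemV : ((ν.1, ![ε, 0]) : ℝ × (Fin 2 → ℝ)) ∈ V := by
      apply hballV
      simp only [Metric.mem_ball, Real.dist_eq, sub_zero]
      rw [abs_of_pos hε0]; exact hεV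
    -- move (μre, ![ε,0]) to (ν.1, ![ε,0]) inside U
    have hSO1 : IsSO2 (1 : Matrix (Fin 2) (Fin 2) ℝ) := by
      constructor
      · simp
      · simp
    have key : coadj 1 ![0, (μre - ν.1) / ε] (μre, ![ε, 0]) = (ν.1, ![ε, 0]) := by
      unfold coadj Jmat
      have hJ : (!![(0:ℝ), 1; -1, 0]).mulVec ![ε, 0] = ![0, -ε] := by
        funext i
        fin_cases i <;>
          simp [Matrix.mulVec, dotProduct, Fin.sum_univ_two]
      rw [hJ, Matrix.one_mulVec, Matrix.one_mulVec]
      ext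
      · simp only [dotProduct, Fin.sum_univ_two, Matrix.cons_val_zero,
          Matrix.cons_val_one, Matrix.head_cons]
        field_simp
        ring
      · rfl
    refine ⟨(ν.1, ![ε, 0]), ?_, hmemV⟩
    have := hUi 1 ![0, (μre - ν.1) / ε] (μre, ![ε, 0]) hSO1 hmemU
    rwa [key] at this
end

section
/- Consider se(2)* ⊕ ℝ² with Hamiltonian h = z - qy + (q² + p²)/2 and equations of motion ẋ = y, ẏ = -x, ż = -qx, q̇ = p, ṗ = -q + y (the Poisson flow for the product of the se(2)* bracket with the canonical bracket on ℝ²). Then for every δ > 0 the curve x = δ sin t, y = δ cos t, z = (δ²/8)(t sin 2t - sin²t - t²), q = (δ/2) t sin t, p = (δ/2)(sin t + t cos t) is a solution, and hence the origin is an unstable equilibrium: solutions starting arbitrarily close to 0 become unbounded. -/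
/-- The system `ẋ = y, ẏ = -x, ż = -qx, q̇ = p, ṗ = -q + y` on `ℝ⁵`
(coordinates `(x, y, z, q, p)`). -/
def Solves (c : ℝ → (Fin 5 → ℝ)) : Prop :=
  ∀ t : ℝ, HasDerivAt c ![c t 1, -c t 0, -(c t 3) * c t 0, c t 4, -c t 3 + c t 1] t

lemma solves_curve (δ : ℝ) : Solves (fun t =>
      ![δ * Real.sin t,
        δ * Real.cos t,
        δ ^ 2 / 8 * (t * Real.sin (2 * t) - Real.sin t ^ 2 - t ^ 2),
        δ / 2 * (t * Real.sin t),
        δ / 2 * (Real.sin t + t * Real.cos t)]) := by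
  intro t
  rw [hasDerivAt_pi]
  intro i
  have hsin := Real.hasDerivAt_sin t
  have hcos := Real.hasDerivAt_cos t
  have h2t : HasDerivAt (fun s : ℝ => 2 * s) 2 t := by
    simpa using (hasDerivAt_id t).const_mul 2
  have hsin2 : HasDerivAt (fun s : ℝ => Real.sin (2 * s)) (Real.cos (2 * t) * 2) t :=
    (Real.hasDerivAt_sin (2 * t)).comp t h2t
  fin_cases i
  · exact hsin.const_mul δ
  · show HasDerivAt (fun s : ℝ => δ * Real.cos s) (-(δ * Real.sin t)) t
    have := hcos.const_mul δ
    refine this.congr_deriv ?_; ring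
  · show HasDerivAt (fun s : ℝ => δ ^ 2 / 8 * (s * Real.sin (2 * s) - Real.sin s ^ 2 - s ^ 2))
      (-(δ / 2 * (t * Real.sin t)) * (δ * Real.sin t)) t
    have h1 : HasDerivAt (fun s : ℝ => s * Real.sin (2 * s))
        (1 * Real.sin (2 * t) + t * (Real.cos (2 * t) * 2)) t :=
      (hasDerivAt_id t).mul hsin2
    have h2 : HasDerivAt (fun s : ℝ => Real.sin s ^ 2)
        ((2 : ℕ) * Real.sin t ^ 1 * Real.cos t) t := hsin.pow 2
    have h3 : HasDerivAt (fun s : ℝ => s ^ 2) ((2 : ℕ) * t ^ 1) t := hasDerivAt_pow 2 t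
    have := ((h1.sub h2).sub h3).const_mul (δ ^ 2 / 8)
    refine this.congr_deriv (Eq.symm ?_)
    rw [Real.sin_two_mul, Real.cos_two_mul]
    push_cast
    linear_combination (-(δ ^ 2 / 2) * t) * Real.sin_sq_add_cos_sq t
  · show HasDerivAt (fun s : ℝ => δ / 2 * (s * Real.sin s)) (δ / 2 * (Real.sin t + t * Real.cos t)) t
    have := ((hasDerivAt_id t).mul hsin).const_mul (δ / 2)
    refine this.congr_deriv ?_; simp only [id_eq]; ring
  · show HasDerivAt (fun s : ℝ => δ / 2 * (Real.sin s + s * Real.cos s))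
      (-(δ / 2 * (t * Real.sin t)) + δ * Real.cos t) t
    have := (hsin.add ((hasDerivAt_id t).mul hcos)).const_mul (δ / 2)
    refine this.congr_deriv ?_; simp only [id_eq]; ring

/-- For every `δ > 0` the explicit curve is a solution of the `se(2)* ⊕ ℝ²` system with
`h = z - qy + (q² + p²)/2`; hence the origin is unstable: solutions starting arbitrarily
close to `0` become unbounded. -/
theorem stmt17 :
    (∀ δ : ℝ, 0 < δ → Solves (fun t =>
      ![δ * Real.sin t,
        δ * Real.cos t,
        δ ^ 2 / 8 * (t * Real.sin (2 * t) - Real.sin t ^ 2 - t ^ 2),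
        δ / 2 * (t * Real.sin t),
        δ / 2 * (Real.sin t + t * Real.cos t)])) ∧
    (∃ ε > 0, ∀ δ > 0, ∃ c : ℝ → (Fin 5 → ℝ), Solves c ∧ ‖c 0‖ < δ ∧
      ∀ M : ℝ, ∃ t > (0 : ℝ), M ≤ ‖c t‖) := by
  refine ⟨fun δ _ => solves_curve δ, 1, one_pos, fun δ hδ => ?_⟩
  set η := δ / 2 with hη
  have hηpos : 0 < η := by positivity
  refine ⟨fun t =>
      ![η * Real.sin t,
        η * Real.cos t,
        η ^ 2 / 8 * (t * Real.sin (2 * t) - Real.sin t ^ 2 - t ^ 2),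
        η / 2 * (t * Real.sin t),
        η / 2 * (Real.sin t + t * Real.cos t)], solves_curve η, ?_, ?_⟩
  · have h0 : ‖(![η * Real.sin 0, η * Real.cos 0,
        η ^ 2 / 8 * (0 * Real.sin (2 * 0) - Real.sin 0 ^ 2 - 0 ^ 2),
        η / 2 * (0 * Real.sin 0),
        η / 2 * (Real.sin 0 + 0 * Real.cos 0)] : Fin 5 → ℝ)‖ ≤ η := by
      rw [pi_norm_le_iff_of_nonneg hηpos.le]
      intro i
      fin_cases i <;>
        simp [Real.norm_eq_abs, abs_of_nonneg hηpos.le, hηpos.le]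
    calc ‖_‖ ≤ η := h0
    _ < δ := by rw [hη]; linarith
  · intro M
    obtain ⟨n, hn⟩ := exists_nat_ge (2 * M / η)
    set t := Real.pi / 2 + n * (2 * Real.pi) with ht
    clear_value t
    have hpi := Real.pi_gt_three
    have htpos : 0 < t := by
      have : (0:ℝ) ≤ n * (2 * Real.pi) := by positivity
      rw [ht]; linarith
    refine ⟨t, htpos, ?_⟩
    have hsint : Real.sin t = 1 := by
      rw [ht, Real.sin_add_nat_mul_two_pi, Real.sin_pi_div_two]
    have htge : (n : ℝ) ≤ t := by
      have h1 : (n : ℝ) * 1 ≤ (n : ℝ) * (2 * Real.pi) := by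
        apply mul_le_mul_of_nonneg_left _ (Nat.cast_nonneg n)
        linarith
      rw [ht]; nlinarith
    have hq : η / 2 * (t * Real.sin t) = η / 2 * t := by rw [hsint]; ring
    have hM : M ≤ η / 2 * t := by
      have h1 : 2 * M / η ≤ t := le_trans hn htge
      have h2 : 2 * M ≤ η * t := by
        have := (div_le_iff₀ hηpos).mp h1
        linarith
      have h3 : η / 2 * t = η * t / 2 := by ring
      linarith
    have hcomp : η / 2 * t ≤ ‖(![η * Real.sin t, η * Real.cos t,
        η ^ 2 / 8 * (t * Real.sin (2 * t) - Real.sin t ^ 2 - t ^ 2),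
        η / 2 * (t * Real.sin t),
        η / 2 * (Real.sin t + t * Real.cos t)] : Fin 5 → ℝ)‖ := by
      have := norm_le_pi_norm (![η * Real.sin t, η * Real.cos t,
        η ^ 2 / 8 * (t * Real.sin (2 * t) - Real.sin t ^ 2 - t ^ 2),
        η / 2 * (t * Real.sin t),
        η / 2 * (Real.sin t + t * Real.cos t)] : Fin 5 → ℝ) 3
      simp only [Matrix.cons_val_three, Matrix.tail_cons, Matrix.head_cons,
        Real.norm_eq_abs] at this
      calc η / 2 * t = η / 2 * (t * Real.sin t) := hq.symm
      _ ≤ |η / 2 * (t * Real.sin t)| := le_abs_self _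
      _ ≤ _ := this
    exact le_trans hM hcomp
end
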